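/- Let G = (V, E) be an unweighted undirected simple graph, let k ≥ 0, and let G₀ be the bipartite double cover of G. Suppose H₀ is a (2k+1)-additive spanner of G₀. Define H to be the spanning subgraph of G whose edge set consists of all edges {u, v} ∈ E such that H₀ contains the edge {(u,0),(v,1)} or the edge {(u,1),(v,0)}. Then H is a (2k)-additive spanner of G. -/

import Mathlib

/-- The bipartite double cover of `G`: vertices `V × Bool`, with `(u, i)`
adjacent to `(v, j)` iff `u ~ v` in `G` and `i ≠ j`. -/
def doubleCover {V : Type*} (G : SimpleGraph V) : SimpleGraph (V × Bool) where
  Adj p q := G.Adj p.1 q.1 ∧ p.2 ≠ q.2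
  symm := by
    constructor
    rintro p q ⟨h, hne⟩
    exact ⟨h.symm, hne.symm⟩
  loopless := by
    constructor
    rintro p ⟨-, hne⟩
    exact hne rfl

/-- The projection of a spanning subgraph `H₀` of the double cover of `G`
back to `G`: an edge `{u, v}` of `G` is kept iff `H₀` contains the edge
`{(u, 0), (v, 1)}` or the edge `{(u, 1), (v, 0)}`. -/
def projectedSubgraph {V : Type*} (G : SimpleGraph V)
    (H₀ : SimpleGraph (V × Bool)) : SimpleGraph V where
  Adj u v := G.Adj u v ∧
    (H₀.Adj (u, false) (v, true) ∨ H₀.Adj (u, true) (v, false))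
  symm := by
    constructor
    rintro u v ⟨h, h' | h'⟩
    · exact ⟨h.symm, Or.inr h'.symm⟩
    · exact ⟨h.symm, Or.inl h'.symm⟩
  loopless := by
    constructor
    rintro u ⟨h, -⟩
    exact G.loopless.irrefl u h

section Aux
variable {V : Type*} {G : SimpleGraph V} {H₀ : SimpleGraph (V × Bool)}

lemma dc_parity : ∀ {p q : V × Bool} (w : (doubleCover G).Walk p q),
    w.length % 2 = (if p.2 = q.2 then 0 else 1) := by
  intro p q w
  induction w with
  | nil => simp
  | cons h w ih =>
    rename_i a b c
    have hne : a.2 ≠ b.2 := h.2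
    simp only [SimpleGraph.Walk.length_cons]
    rw [Nat.add_mod, ih]
    rcases Bool.eq_false_or_eq_true a.2 with ha | ha <;>
      rcases Bool.eq_false_or_eq_true b.2 with hb | hb <;>
      rcases Bool.eq_false_or_eq_true c.2 with hc | hc <;>
      simp_all

lemma dc_lift : ∀ {u v : V} (w : G.Walk u v) (b : Bool),
    ∃ c, ∃ w' : (doubleCover G).Walk (u, b) (v, c), w'.length = w.length := by
  intro u v w
  induction w with
  | nil => exact fun b => ⟨b, .nil, rfl⟩
  | cons h w ih =>
    intro b
    obtain ⟨c, w', hw'⟩ := ih (!b)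
    exact ⟨c, .cons ⟨h, (Bool.not_ne_self b).symm⟩ w', by exact congrArg (· + 1) hw'⟩

lemma dc_proj (hle : H₀ ≤ doubleCover G) :
    ∀ {p q : V × Bool} (w : H₀.Walk p q),
    ∃ w' : (projectedSubgraph G H₀).Walk p.1 q.1, w'.length = w.length := by
  intro p q w
  induction w with
  | nil => exact ⟨.nil, rfl⟩
  | cons h w ih =>
    rename_i a b c
    obtain ⟨w', hw'⟩ := ih
    have hdc := hle h
    have hadj : (projectedSubgraph G H₀).Adj a.1 b.1 := by
      refine ⟨hdc.1, ?_⟩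
      have hne : a.2 ≠ b.2 := hdc.2
      rcases Bool.eq_false_or_eq_true a.2 with ha | ha <;>
        rcases Bool.eq_false_or_eq_true b.2 with hb | hb <;>
        simp_all
      · exact Or.inr (by rwa [← ha, ← hb, Prod.mk.eta, Prod.mk.eta])
      · exact Or.inl (by rwa [← ha, ← hb, Prod.mk.eta, Prod.mk.eta])
    exact ⟨.cons hadj w', by simp [hw']⟩
end Aux

theorem projected_spanner_is_even_additive_spanner
    {V : Type*} (G : SimpleGraph V) (k : ℕ)
    (H₀ : SimpleGraph (V × Bool))
    (hle : H₀ ≤ doubleCover G)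
    (hspan : ∀ a b : V × Bool,
      H₀.edist a b ≤ (doubleCover G).edist a b + (2 * k + 1)) :
    projectedSubgraph G H₀ ≤ G ∧
      ∀ u v : V,
        (projectedSubgraph G H₀).edist u v ≤ G.edist u v + 2 * k := by
  refine ⟨fun u v h => h.1, fun u v => ?_⟩
  by_cases htop : G.edist u v = ⊤
  · simp [htop]
  obtain ⟨w, hw⟩ := SimpleGraph.exists_walk_of_edist_ne_top htop
  -- lift w to the double cover
  obtain ⟨c, w₀, hw₀⟩ := dc_lift w false
  -- parity of endpoints: c = parity of w.length
  have hpar₀ : w₀.length % 2 = (if (false : Bool) = c then 0 else 1) := dc_parity w₀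
  have hH := hspan (u, false) (v, c)
  have hdcle : (doubleCover G).edist (u, false) (v, c) ≤ w.length :=
    hw₀ ▸ SimpleGraph.edist_le w₀
  have hHle : H₀.edist (u, false) (v, c) ≤ (w.length : ℕ∞) + (2 * k + 1) :=
    hH.trans (add_le_add_left hdcle _)
  have hcast : ((w.length + (2 * k + 1) : ℕ) : ℕ∞) = ↑w.length + (2 * ↑k + 1) := by
    push_cast; ring
  have hHne : H₀.edist (u, false) (v, c) ≠ ⊤ :=
    ne_top_of_le_ne_top (hcast ▸ ENat.coe_ne_top _) hHle
  obtain ⟨w₁, hw₁⟩ := SimpleGraph.exists_walk_of_edist_ne_top hHne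
  -- parity of w₁ matches parity of w
  have hpar₁ : w₁.length % 2 = (if (false : Bool) = c then 0 else 1) := by
    have := dc_parity (w₁.mapLe hle)
    simpa using this
  have hlen : (w₁.length : ℕ∞) ≤ (w.length : ℕ∞) + (2 * k + 1) := hw₁ ▸ hHle
  have hlenN : w₁.length ≤ w.length + (2 * k + 1) := by exact_mod_cast hlen
  have hpar : w₁.length % 2 = w.length % 2 := by
    rw [hpar₁, ← hw₀, hpar₀]
  have hlen2 : w₁.length ≤ w.length + 2 * k := by omega
  obtain ⟨w₂, hw₂⟩ := dc_proj hle w₁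
  calc (projectedSubgraph G H₀).edist u v ≤ w₂.length := SimpleGraph.edist_le w₂
    _ ≤ (w.length + 2 * k : ℕ) := by exact_mod_cast hw₂ ▸ hlen2
    _ = G.edist u v + 2 * k := by rw [← hw]; push_cast; ring
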